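/- The set BV = {F ∈ C(I) : F is VB on [0,1]} of continuous functions of bounded variation is Σ⁰₂-complete: BV is an Fσ subset of C(I) (a countable union of closed sets), and for every Fσ set B ⊆ ℕ^ℕ there is a continuous map g : ℕ^ℕ → C(I) with g⁻¹(BV) = B. -/

import Mathlib

open Set MeasureTheory Topology

noncomputable section

/-- `C(I)`: continuous real-valued functions on the unit interval. -/
abbrev CI := C(unitInterval, ℝ)

/-- Oscillation of `F` on the open interval `(a,b)`: `sup_{x,y ∈ (a,b)} |F x - F y|`. -/
noncomputable def osc (F : CI) (a b : unitInterval) : ℝ :=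
  sSup {r : ℝ | ∃ x ∈ Set.Ioo a b, ∃ y ∈ Set.Ioo a b, r = |F x - F y|}

/-- `a₀ ≤ b₀ ≤ a₁ ≤ b₁ ≤ … ≤ a_k ≤ b_k` is a finite non-decreasing sequence of points of `E`. -/
def SeqOn (E : Set unitInterval) (k : ℕ) (a b : ℕ → unitInterval) : Prop :=
  (∀ i ≤ k, a i ∈ E) ∧ (∀ i ≤ k, b i ∈ E) ∧ (∀ i ≤ k, a i ≤ b i) ∧ ∀ i < k, b i ≤ a (i + 1)

/-- `F` is VB on `E`. -/
def IsVBOn (F : CI) (E : Set unitInterval) : Prop :=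
  ∃ N : ℝ, ∀ (k : ℕ) (a b : ℕ → unitInterval), SeqOn E k a b →
    ∑ i ∈ Finset.range (k + 1), |F (b i) - F (a i)| < N

/-- `F` is VB_* on `E`. -/
def IsVBStarOn (F : CI) (E : Set unitInterval) : Prop :=
  ∃ N : ℝ, ∀ (k : ℕ) (a b : ℕ → unitInterval), SeqOn E k a b →
    ∑ i ∈ Finset.range (k + 1), osc F (a i) (b i) < N

/-- `F` is AC on `E`. -/
def IsACOn (F : CI) (E : Set unitInterval) : Prop :=
  ∀ ε : ℝ, 0 < ε → ∃ δ : ℝ, 0 < δ ∧ ∀ (k : ℕ) (a b : ℕ → unitInterval), SeqOn E k a b →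
    (∑ i ∈ Finset.range (k + 1), ((b i : ℝ) - (a i : ℝ))) < δ →
    ∑ i ∈ Finset.range (k + 1), |F (b i) - F (a i)| < ε

/-- `F` is AC_* on `E`. -/
def IsACStarOn (F : CI) (E : Set unitInterval) : Prop :=
  ∀ ε : ℝ, 0 < ε → ∃ δ : ℝ, 0 < δ ∧ ∀ (k : ℕ) (a b : ℕ → unitInterval), SeqOn E k a b →
    (∑ i ∈ Finset.range (k + 1), ((b i : ℝ) - (a i : ℝ))) < δ →
    ∑ i ∈ Finset.range (k + 1), osc F (a i) (b i) < ε

/-- `F ∈ VBG`. -/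
def IsVBG (F : CI) : Prop :=
  ∃ E : ℕ → Set unitInterval, (∀ n, IsClosed (E n)) ∧ (⋃ n, E n) = Set.univ ∧
    ∀ n, IsVBOn F (E n)

/-- `F ∈ VBG_*`. -/
def IsVBGStar (F : CI) : Prop :=
  ∃ E : ℕ → Set unitInterval, (∀ n, IsClosed (E n)) ∧ (⋃ n, E n) = Set.univ ∧
    ∀ n, IsVBStarOn F (E n)

/-- `F ∈ ACG`. -/
def IsACG (F : CI) : Prop :=
  ∃ E : ℕ → Set unitInterval, (∀ n, IsClosed (E n)) ∧ (⋃ n, E n) = Set.univ ∧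
    ∀ n, IsACOn F (E n)

/-- `F ∈ ACG_*`. -/
def IsACGStar (F : CI) : Prop :=
  ∃ E : ℕ → Set unitInterval, (∀ n, IsClosed (E n)) ∧ (⋃ n, E n) = Set.univ ∧
    ∀ n, IsACStarOn F (E n)

/-- `A` is Fσ: a countable union of closed sets. -/
def IsFSigma {X : Type*} [TopologicalSpace X] (A : Set X) : Prop :=
  ∃ C : ℕ → Set X, (∀ n, IsClosed (C n)) ∧ A = ⋃ n, C n

noncomputable def w (s : ℝ) : ℝ := Metric.infDist s (Set.range ((↑) : ℤ → ℝ))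

lemma w_lip (u v : ℝ) : |w u - w v| ≤ |u - v| := by
  have := (Metric.lipschitz_infDist_pt (Set.range ((↑) : ℤ → ℝ))).dist_le_mul u v
  simpa [w, Real.dist_eq] using this

lemma w_cont : Continuous w := (Metric.lipschitz_infDist_pt _).continuous

lemma w_nonneg (s : ℝ) : 0 ≤ w s := Metric.infDist_nonneg

lemma w_int (z : ℤ) : w z = 0 :=
  Metric.infDist_zero_of_mem (Set.mem_range_self z)

lemma w_half (z : ℤ) : w (z + 1/2) = 1/2 := by
  refine le_antisymm ?_ ?_
  · have hz : (z:ℝ) ∈ Set.range ((↑) : ℤ → ℝ) := Set.mem_range_self z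
    have := Metric.infDist_le_dist_of_mem (x := (z:ℝ) + 1/2) hz
    simpa [w, Real.dist_eq, abs_of_nonneg] using this
  · by_contra h
    push_neg at h
    obtain ⟨y, ⟨m, rfl⟩, hy⟩ := (Metric.infDist_lt_iff (s := Set.range ((↑) : ℤ → ℝ)) (Set.range_nonempty _)).mp h
    rw [Real.dist_eq] at hy
    rcases le_or_gt (m : ℝ) z with hm | hm
    · have : (m:ℝ) ≤ z := hm
      have : (1:ℝ)/2 ≤ |(z:ℝ) + 1/2 - m| := by
        rw [abs_of_nonneg (by linarith)]; linarith
      linarith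
    · have : (z:ℝ) + 1 ≤ m := by exact_mod_cast hm
      have : (1:ℝ)/2 ≤ |(z:ℝ) + 1/2 - m| := by
        rw [abs_of_nonpos (by linarith)]; linarith
      linarith

lemma w_le_half (s : ℝ) : w s ≤ 1/2 := by
  have hm : ((round s : ℤ) : ℝ) ∈ Set.range ((↑) : ℤ → ℝ) := Set.mem_range_self _
  have h := Metric.infDist_le_dist_of_mem (x := s) hm
  calc w s ≤ dist s (round s : ℝ) := h
    _ ≤ 1/2 := by rw [Real.dist_eq]; exact abs_sub_round s

lemma clamp_lip (u v : ℝ) : |min 1 (max 0 u) - min 1 (max 0 v)| ≤ |u - v| := by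
  have h1 : |min 1 (max 0 u) - min 1 (max 0 v)| ≤ max |(1:ℝ) - 1| |max 0 u - max 0 v| :=
    abs_min_sub_min_le_max 1 (max 0 u) 1 (max 0 v)
  have h2 : |max u 0 - max v 0| ≤ |u - v| := abs_max_sub_max_le_abs u v 0
  refine h1.trans ?_
  rw [max_comm (0:ℝ) u, max_comm (0:ℝ) v]
  simpa using h2

noncomputable def lpt (k : ℕ) : ℝ := 1 - (1/2:ℝ)^k

lemma lpt_mono : Monotone lpt := by
  intro i j h
  have : (1/2:ℝ)^j ≤ (1/2)^i := pow_le_pow_of_le_one (by norm_num) (by norm_num) h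
  simp only [lpt]; linarith

lemma lpt_nonneg (k : ℕ) : 0 ≤ lpt k := by
  have : (1/2:ℝ)^k ≤ 1 := pow_le_one₀ (by norm_num) (by norm_num)
  simp only [lpt]; linarith

lemma lpt_le_one (k : ℕ) : lpt k ≤ 1 := by
  have : (0:ℝ) < (1/2)^k := by positivity
  simp only [lpt]; linarith

lemma lpt_succ (k : ℕ) : lpt (k+1) = lpt k + (1/2:ℝ)^(k+1) := by
  simp only [lpt, pow_succ]; ring

noncomputable def psi (k : ℕ) (t : ℝ) : ℝ :=
  (1/2:ℝ)^k * w ((4:ℝ)^k * min 1 (max 0 ((2:ℝ)^(k+1) * (t - lpt k))))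

lemma psi_cont (k : ℕ) : Continuous (psi k) := by
  unfold psi
  exact continuous_const.mul (w_cont.comp (by fun_prop))

lemma psi_nonneg (k : ℕ) (t : ℝ) : 0 ≤ psi k t := by
  have h := w_nonneg ((4:ℝ)^k * min 1 (max 0 ((2:ℝ)^(k+1) * (t - lpt k))))
  have h2 : (0:ℝ) ≤ (1/2:ℝ)^k := by positivity
  exact mul_nonneg h2 h

lemma psi_le (k : ℕ) (t : ℝ) : psi k t ≤ (1/2:ℝ)^k := by
  have h := w_le_half ((4:ℝ)^k * min 1 (max 0 ((2:ℝ)^(k+1) * (t - lpt k))))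
  have hp : (0:ℝ) < (1/2)^k := by positivity
  calc psi k t ≤ (1/2:ℝ)^k * (1/2) := by
        exact mul_le_mul_of_nonneg_left h hp.le
    _ ≤ (1/2:ℝ)^k := by nlinarith

lemma psi_lip (k : ℕ) (t s : ℝ) :
    |psi k t - psi k s| ≤ ((1/2:ℝ)^k * 4^k * 2^(k+1)) * |t - s| := by
  have h4 : (0:ℝ) < (4:ℝ)^k := by positivity
  have h2 : (0:ℝ) < (1/2:ℝ)^k := by positivity
  have hw := w_lip ((4:ℝ)^k * min 1 (max 0 ((2:ℝ)^(k+1) * (t - lpt k))))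
      ((4:ℝ)^k * min 1 (max 0 ((2:ℝ)^(k+1) * (s - lpt k))))
  have hc := clamp_lip ((2:ℝ)^(k+1) * (t - lpt k)) ((2:ℝ)^(k+1) * (s - lpt k))
  have key : |(4:ℝ)^k * min 1 (max 0 ((2:ℝ)^(k+1) * (t - lpt k)))
      - (4:ℝ)^k * min 1 (max 0 ((2:ℝ)^(k+1) * (s - lpt k)))|
      ≤ (4:ℝ)^k * ((2:ℝ)^(k+1) * |t - s|) := by
    rw [← mul_sub, abs_mul, abs_of_pos h4]
    refine mul_le_mul_of_nonneg_left (hc.trans ?_) h4.le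
    rw [← mul_sub, abs_mul]
    have : |(2:ℝ)^(k+1)| = (2:ℝ)^(k+1) := abs_of_pos (by positivity)
    rw [this]
    rw [mul_sub] at *
    have : t - lpt k - (s - lpt k) = t - s := by ring
    rw [← mul_sub, ← mul_sub, this] at *
  calc |psi k t - psi k s|
      = (1/2:ℝ)^k * |w _ - w _| := by rw [psi, psi, ← mul_sub, abs_mul, abs_of_pos h2]
    _ ≤ (1/2:ℝ)^k * ((4:ℝ)^k * ((2:ℝ)^(k+1) * |t - s|)) := by
        exact mul_le_mul_of_nonneg_left (hw.trans key) h2.le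
    _ = ((1/2:ℝ)^k * 4^k * 2^(k+1)) * |t - s| := by ring

lemma psi_left (k : ℕ) (t : ℝ) (h : t ≤ lpt k) : psi k t = 0 := by
  have h0 : max 0 ((2:ℝ)^(k+1) * (t - lpt k)) = 0 := by
    apply max_eq_left
    have : (0:ℝ) < (2:ℝ)^(k+1) := by positivity
    nlinarith
  have : w ((4:ℝ)^k * min 1 (max 0 ((2:ℝ)^(k+1) * (t - lpt k)))) = 0 := by
    rw [h0]
    norm_num
    simpa using w_int 0
  rw [psi, this, mul_zero]

lemma psi_right (k : ℕ) (t : ℝ) (h : lpt (k+1) ≤ t) : psi k t = 0 := by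
  have h1 : (1:ℝ) ≤ (2:ℝ)^(k+1) * (t - lpt k) := by
    have ht : (1/2:ℝ)^(k+1) ≤ t - lpt k := by
      have := lpt_succ k; linarith
    calc (1:ℝ) = (2:ℝ)^(k+1) * (1/2:ℝ)^(k+1) := by
          rw [← mul_pow]; norm_num
      _ ≤ (2:ℝ)^(k+1) * (t - lpt k) :=
          mul_le_mul_of_nonneg_left ht (by positivity)
  have h0 : min 1 (max 0 ((2:ℝ)^(k+1) * (t - lpt k))) = 1 := by
    apply min_eq_left
    exact le_max_of_le_right h1
  rw [psi, h0, mul_one]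
  have : ((4:ℝ)^k) = ((4^k : ℤ) : ℝ) := by push_cast; ring
  rw [this, w_int, mul_zero]

lemma psi_at (k : ℕ) (c : ℝ) (h0 : 0 ≤ c) (h1 : c ≤ 1) :
    psi k (lpt k + c * (1/2:ℝ)^(k+1)) = (1/2:ℝ)^k * w ((4:ℝ)^k * c) := by
  have harg : (2:ℝ)^(k+1) * (lpt k + c * (1/2:ℝ)^(k+1) - lpt k) = c := by
    have : (2:ℝ)^(k+1) * (1/2:ℝ)^(k+1) = 1 := by rw [← mul_pow]; norm_num
    calc (2:ℝ)^(k+1) * (lpt k + c * (1/2:ℝ)^(k+1) - lpt k)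
        = c * ((2:ℝ)^(k+1) * (1/2:ℝ)^(k+1)) := by ring
      _ = c := by rw [this, mul_one]
  rw [psi, harg, max_eq_right h0, min_eq_right h1]

lemma psi_at_a (k i : ℕ) (hi : i ≤ 4^k) :
    psi k (lpt k + ((i:ℝ)/(4:ℝ)^k) * (1/2:ℝ)^(k+1)) = 0 := by
  have h4 : (0:ℝ) < (4:ℝ)^k := by positivity
  have h0 : (0:ℝ) ≤ (i:ℝ)/(4:ℝ)^k := by positivity
  have h1 : (i:ℝ)/(4:ℝ)^k ≤ 1 := by
    rw [div_le_one h4]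
    exact_mod_cast hi
  rw [psi_at k _ h0 h1]
  have : (4:ℝ)^k * ((i:ℝ)/(4:ℝ)^k) = ((i:ℤ):ℝ) := by
    field_simp
    simp
  rw [this, w_int, mul_zero]

lemma psi_at_b (k i : ℕ) (hi : 2*i+1 ≤ 2*4^k) :
    psi k (lpt k + (((2*i+1:ℕ):ℝ)/(2*(4:ℝ)^k)) * (1/2:ℝ)^(k+1)) = (1/2:ℝ)^(k+1) := by
  have h4 : (0:ℝ) < 2*(4:ℝ)^k := by positivity
  have h0 : (0:ℝ) ≤ ((2*i+1:ℕ):ℝ)/(2*(4:ℝ)^k) := by positivity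
  have h1 : ((2*i+1:ℕ):ℝ)/(2*(4:ℝ)^k) ≤ 1 := by
    rw [div_le_one h4]
    push_cast
    have : ((2*i+1:ℕ):ℝ) ≤ ((2*4^k:ℕ):ℝ) := by exact_mod_cast hi
    push_cast at this
    linarith
  rw [psi_at k _ h0 h1]
  have harg : (4:ℝ)^k * (((2*i+1:ℕ):ℝ)/(2*(4:ℝ)^k)) = (i:ℤ) + 1/2 := by
    push_cast
    field_simp
  rw [harg, w_half]
  push_cast
  ring

section Baire
variable (C : ℕ → Set (ℕ → ℕ))

def Dset (n : ℕ) : Set (ℕ → ℕ) := ⋃ m ∈ Finset.range (n+1), C m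

lemma Dset_closed (hC : ∀ n, IsClosed (C n)) (n : ℕ) : IsClosed (Dset C n) :=
  isClosed_biUnion_finset fun m _ => hC m

lemma Dset_mono {n n' : ℕ} (h : n ≤ n') : Dset C n ⊆ Dset C n' := by
  intro x hx
  obtain ⟨m, hm, hxm⟩ := Set.mem_iUnion₂.mp hx
  refine Set.mem_iUnion₂.mpr ⟨m, ?_, hxm⟩
  simp only [Finset.mem_range] at *
  omega

lemma subset_Dset (n : ℕ) : C n ⊆ Dset C n := by
  intro x hx
  exact Set.mem_iUnion₂.mpr ⟨n, Finset.self_mem_range_succ n, hx⟩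

lemma Dset_subset (n : ℕ) : Dset C n ⊆ ⋃ m, C m := by
  intro x hx
  obtain ⟨m, _, hm⟩ := Set.mem_iUnion₂.mp hx
  exact Set.mem_iUnion.mpr ⟨m, hm⟩

def SS (k : ℕ) (x : ℕ → ℕ) : Set ℕ := {n | ∃ y ∈ Dset C n, ∀ i < k, y i = x i}

lemma SS_up {k : ℕ} {x : ℕ → ℕ} {n n' : ℕ} (h : n ∈ SS C k x) (hn : n ≤ n') : n' ∈ SS C k x := by
  obtain ⟨y, hy, hagree⟩ := h
  exact ⟨y, Dset_mono C hn hy, hagree⟩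

lemma SS_anti {k k' : ℕ} (hk : k ≤ k') (x : ℕ → ℕ) : SS C k' x ⊆ SS C k x := by
  rintro n ⟨y, hy, hagree⟩
  exact ⟨y, hy, fun i hi => hagree i (lt_of_lt_of_le hi hk)⟩

noncomputable def mIdx (k : ℕ) (x : ℕ → ℕ) : ℕ := sInf (SS C k x ∪ {k})

lemma mIdx_le (k : ℕ) (x : ℕ → ℕ) : mIdx C k x ≤ k :=
  Nat.sInf_le (Or.inr rfl)

lemma mIdx_mono {k k' : ℕ} (hk : k ≤ k') (x : ℕ → ℕ) : mIdx C k x ≤ mIdx C k' x := by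
  have hne : (SS C k' x ∪ {k'}).Nonempty := ⟨k', Or.inr rfl⟩
  have hmem := Nat.sInf_mem hne
  rcases hmem with h | h
  · exact Nat.sInf_le (Or.inl (SS_anti C hk x h))
  · simp only [Set.mem_singleton_iff] at h
    calc mIdx C k x ≤ k := mIdx_le C k x
      _ ≤ k' := hk
      _ = mIdx C k' x := by rw [mIdx, h]

lemma mIdx_congr {k : ℕ} {x y : ℕ → ℕ} (h : ∀ i < k, x i = y i) :
    mIdx C k x = mIdx C k y := by
  have : SS C k x = SS C k y := by
    ext n
    constructor
    · rintro ⟨z, hz, ha⟩; exact ⟨z, hz, fun i hi => (ha i hi).trans (h i hi)⟩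
    · rintro ⟨z, hz, ha⟩; exact ⟨z, hz, fun i hi => (ha i hi).trans (h i hi).symm⟩
  rw [mIdx, mIdx, this]

lemma mIdx_le_of_mem {n : ℕ} {x : ℕ → ℕ} (h : x ∈ Dset C n) (k : ℕ) : mIdx C k x ≤ n :=
  Nat.sInf_le (Or.inl ⟨x, h, fun _ _ => rfl⟩)

lemma mem_of_bounded (hC : ∀ n, IsClosed (C n)) {n : ℕ} {x : ℕ → ℕ}
    (h : ∀ k, mIdx C k x ≤ n) : x ∈ Dset C n := by
  have key : ∀ k, ∃ y ∈ Dset C n, ∀ i < k, y i = x i := by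
    intro k
    set K := max (n+1) k with hK
    have hle : mIdx C K x ≤ n := h K
    have hne : (SS C K x ∪ {K}).Nonempty := ⟨K, Or.inr rfl⟩
    have hmem := Nat.sInf_mem hne
    rcases hmem with hm | hm
    · have : n ∈ SS C K x := SS_up C hm hle
      obtain ⟨y, hy, ha⟩ := this
      exact ⟨y, hy, fun i hi => ha i (lt_of_lt_of_le hi (le_max_right _ _))⟩
    · simp only [Set.mem_singleton_iff] at hm
      exfalso
      have : K ≤ n := by rw [mIdx, hm] at hle; exact hle
      omega
  have hcl : x ∈ closure (Dset C n) := by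
    rw [_root_.mem_closure_iff]
    intro o ho hxo
    obtain ⟨I, u, hu, hsub⟩ := isOpen_pi_iff.mp ho x hxo
    obtain ⟨K, hK⟩ : ∃ K, ∀ a ∈ I, a < K := by
      rcases I.eq_empty_or_nonempty with rfl | hne
      · exact ⟨0, by simp⟩
      · exact ⟨I.max' hne + 1, fun a ha => Nat.lt_succ_of_le (I.le_max' a ha)⟩
    obtain ⟨y, hy, ha⟩ := key K
    refine ⟨y, hsub ?_, hy⟩
    intro a haI
    rw [ha a (hK a haI)]
    exact (hu a haI).2
  exact (Dset_closed C hC n).closure_subset hcl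

lemma mIdx_stab {n : ℕ} {x : ℕ → ℕ} (h : ∀ k, mIdx C k x ≤ n) :
    ∃ K, ∀ k, K ≤ k → mIdx C k x = mIdx C K x := by
  have hne : (Set.range fun k => mIdx C k x).Nonempty := ⟨mIdx C 0 x, 0, rfl⟩
  have hbdd : BddAbove (Set.range fun k => mIdx C k x) := ⟨n, by rintro _ ⟨k, rfl⟩; exact h k⟩
  obtain ⟨K, hK⟩ := Nat.sSup_mem hne hbdd
  have hK' : mIdx C K x = sSup (Set.range fun k => mIdx C k x) := hK
  refine ⟨K, fun k hk => le_antisymm ?_ (mIdx_mono C hk x)⟩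
  exact (le_csSup hbdd ⟨k, rfl⟩).trans hK'.ge

noncomputable def cc (k : ℕ) (x : ℕ → ℕ) : ℝ :=
  if mIdx C (k+1) x = mIdx C k x then 0 else 1

lemma cc_congr {k : ℕ} {x y : ℕ → ℕ} (h : ∀ i < k+1, x i = y i) : cc C k x = cc C k y := by
  rw [cc, cc, mIdx_congr C h, mIdx_congr C (fun i hi => h i (lt_of_lt_of_le hi (Nat.le_succ k)))]

lemma cc_cont (k : ℕ) : Continuous (cc C k) := by
  rw [continuous_iff_continuousAt]
  intro x
  have hU : IsOpen {y : ℕ → ℕ | ∀ i < k+1, y i = x i} := by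
    have : {y : ℕ → ℕ | ∀ i < k+1, y i = x i}
        = ⋂ i ∈ Finset.range (k+1), (fun y : ℕ → ℕ => y i) ⁻¹' {x i} := by
      ext y; simp [Finset.mem_range]
    rw [this]
    exact isOpen_biInter_finset fun i _ => (continuous_apply i).isOpen_preimage _ (isOpen_discrete _)
  have hmem : {y : ℕ → ℕ | ∀ i < k+1, y i = x i} ∈ nhds x :=
    hU.mem_nhds (fun i _ => rfl)
  have hev : (fun y => cc C k y) =ᶠ[nhds x] (fun _ => cc C k x) :=
    Filter.eventually_of_mem hmem (fun y hy => cc_congr C (fun i hi => hy i hi))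
  exact (continuousAt_const.congr hev.symm)

lemma cc_abs_le (k : ℕ) (x : ℕ → ℕ) : |cc C k x| ≤ 1 := by
  rw [cc]; split <;> norm_num

lemma cc_eventually_zero {x : ℕ → ℕ} (hx : x ∈ ⋃ n, C n) :
    ∃ K, ∀ k, K ≤ k → cc C k x = 0 := by
  obtain ⟨n, hn⟩ := Set.mem_iUnion.mp hx
  have hb : ∀ k, mIdx C k x ≤ n := mIdx_le_of_mem C (subset_Dset C n hn)
  obtain ⟨K, hK⟩ := mIdx_stab C hb
  refine ⟨K, fun k hk => ?_⟩
  rw [cc, if_pos]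
  rw [hK (k+1) (le_trans hk (Nat.le_succ k)), hK k hk]

lemma cc_infinitely_one (hC : ∀ n, IsClosed (C n)) {x : ℕ → ℕ} (hx : x ∉ ⋃ n, C n) :
    ∀ K, ∃ k, K ≤ k ∧ cc C k x = 1 := by
  intro K
  by_contra h
  push_neg at h
  have hz : ∀ k, K ≤ k → mIdx C (k+1) x = mIdx C k x := by
    intro k hk
    have := h k hk
    rw [cc] at this
    by_contra hne
    rw [if_neg hne] at this
    exact this rfl
  have hstab' : ∀ d, mIdx C (K + d) x = mIdx C K x := by
    intro d
    induction d with
    | zero => rfl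
    | succ d ih =>
      have : K + (d+1) = (K + d) + 1 := by omega
      rw [this, hz (K+d) (Nat.le_add_right K d), ih]
  have hstab : ∀ k, K ≤ k → mIdx C k x = mIdx C K x := by
    intro k hk
    have : k = K + (k - K) := by omega
    rw [this, hstab']
  have hb : ∀ k, mIdx C k x ≤ mIdx C K x := by
    intro k
    rcases le_or_gt k K with h' | h'
    · exact mIdx_mono C h' x
    · rw [hstab k h'.le]
  exact hx (Dset_subset C _ (mem_of_bounded C hC hb))

end Baire

noncomputable def Psi (k : ℕ) : CI :=
  ⟨fun t => psi k (t:ℝ), (psi_cont k).comp continuous_subtype_val⟩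

lemma Psi_apply (k : ℕ) (t : unitInterval) : Psi k t = psi k (t:ℝ) := rfl

lemma Psi_norm (k : ℕ) : ‖Psi k‖ ≤ (1/2:ℝ)^k := by
  rw [ContinuousMap.norm_le _ (by positivity)]
  intro t
  rw [Psi_apply, Real.norm_eq_abs, abs_of_nonneg (psi_nonneg k _)]
  exact psi_le k _

lemma smul_norm_le (C : ℕ → Set (ℕ → ℕ)) (x : ℕ → ℕ) (k : ℕ) :
    ‖cc C k x • Psi k‖ ≤ (1/2:ℝ)^k := by
  rw [norm_smul (cc C k x) (Psi k)]
  calc ‖cc C k x‖ * ‖Psi k‖ ≤ 1 * (1/2:ℝ)^k := by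
        apply mul_le_mul (by simpa [Real.norm_eq_abs] using cc_abs_le C k x) (Psi_norm k)
          (norm_nonneg _) (by norm_num)
    _ = (1/2:ℝ)^k := one_mul _

lemma summable_g (C : ℕ → Set (ℕ → ℕ)) (x : ℕ → ℕ) :
    Summable (fun k => cc C k x • Psi k) :=
  Summable.of_norm_bounded (summable_geometric_of_lt_one (by norm_num) (by norm_num))
    (smul_norm_le C x)

noncomputable def gmap (C : ℕ → Set (ℕ → ℕ)) (x : ℕ → ℕ) : CI :=
  ∑' k, cc C k x • Psi k

lemma gmap_cont (C : ℕ → Set (ℕ → ℕ)) : Continuous (gmap C) := by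
  apply continuous_tsum (fun k => (cc_cont C k).smul continuous_const)
    (summable_geometric_of_lt_one (by norm_num) (by norm_num) : Summable fun k => (1/2:ℝ)^k)
  intro k x
  exact smul_norm_le C x k

lemma gmap_apply (C : ℕ → Set (ℕ → ℕ)) (x : ℕ → ℕ) (t : unitInterval) :
    gmap C x t = ∑' k, cc C k x * psi k (t:ℝ) := by
  have h := (ContinuousMap.evalCLM ℝ t).map_tsum (summable_g C x)
  rw [gmap]
  have : (ContinuousMap.evalCLM ℝ t) (∑' k, cc C k x • Psi k)
      = (∑' k, cc C k x • Psi k) t := rfl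
  rw [← this, h]
  refine tsum_congr fun k => ?_
  show (ContinuousMap.evalCLM ℝ t) (cc C k x • Psi k) = _
  rw [_root_.map_smul]
  show cc C k x • (Psi k t) = _
  rw [Psi_apply, smul_eq_mul]

lemma psi_zero_of_ne (k j : ℕ) (hne : j ≠ k) (t : ℝ) (hl : lpt k ≤ t) (hr : t ≤ lpt (k+1)) :
    psi j t = 0 := by
  rcases lt_or_gt_of_ne hne with h | h
  · exact psi_right j t (le_trans (lpt_mono (by omega)) hl)
  · exact psi_left j t (le_trans hr (lpt_mono (by omega)))

lemma gmap_single (C : ℕ → Set (ℕ → ℕ)) (x : ℕ → ℕ) (k : ℕ) (t : unitInterval)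
    (hl : lpt k ≤ (t:ℝ)) (hr : (t:ℝ) ≤ lpt (k+1)) :
    gmap C x t = cc C k x * psi k (t:ℝ) := by
  rw [gmap_apply]
  exact tsum_eq_single k (fun j hj => by
    rw [psi_zero_of_ne k j hj (t:ℝ) hl hr, mul_zero])

lemma seq_sum_le (k : ℕ) (a b : ℕ → unitInterval)
    (hab : ∀ i ≤ k, a i ≤ b i) (hba : ∀ i < k, b i ≤ a (i+1)) :
    ∑ i ∈ Finset.range (k+1), ((b i:ℝ) - (a i:ℝ)) ≤ (b k:ℝ) - (a 0:ℝ) := by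
  induction k with
  | zero => simp
  | succ k ih =>
    rw [Finset.sum_range_succ]
    have h1 := ih (fun i hi => hab i (le_trans hi (Nat.le_succ k))) (fun i hi => hba i (by omega))
    have h2 : (b k:ℝ) ≤ ((a (k+1)):ℝ) := Subtype.coe_le_coe.mpr (hba k (by omega))
    have h3 : ((a (k+1)):ℝ) ≤ ((b (k+1)):ℝ) := Subtype.coe_le_coe.mpr (hab (k+1) le_rfl)
    linarith

lemma isVBOn_of_ev_zero (C : ℕ → Set (ℕ → ℕ)) (x : ℕ → ℕ) (K : ℕ)
    (h0 : ∀ k, K ≤ k → cc C k x = 0) : IsVBOn (gmap C x) Set.univ := by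
  set L := ∑ j ∈ Finset.range K, ((1/2:ℝ)^j * 4^j * 2^(j+1)) with hL
  have hL0 : 0 ≤ L := Finset.sum_nonneg fun j _ => by positivity
  have hlip : ∀ s t : unitInterval, |gmap C x t - gmap C x s| ≤ L * |(t:ℝ) - (s:ℝ)| := by
    intro s t
    rw [gmap_apply, gmap_apply]
    have hz : ∀ (u : unitInterval), ∀ j ∉ Finset.range K, cc C j x * psi j (u:ℝ) = 0 := by
      intro u j hj
      rw [h0 j (by simpa [Finset.mem_range, not_lt] using hj), zero_mul]
    rw [tsum_eq_sum (hz t), tsum_eq_sum (hz s), ← Finset.sum_sub_distrib]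
    refine (Finset.abs_sum_le_sum_abs _ _).trans ?_
    rw [Finset.sum_mul]
    refine Finset.sum_le_sum fun j _ => ?_
    rw [← mul_sub, abs_mul]
    calc |cc C j x| * |psi j (t:ℝ) - psi j (s:ℝ)|
        ≤ 1 * (((1/2:ℝ)^j * 4^j * 2^(j+1)) * |(t:ℝ) - (s:ℝ)|) := by
          exact mul_le_mul (cc_abs_le C j x) (psi_lip j _ _) (abs_nonneg _) (by norm_num)
      _ = ((1/2:ℝ)^j * 4^j * 2^(j+1)) * |(t:ℝ) - (s:ℝ)| := one_mul _
  refine ⟨L + 1, fun k a b hseq => ?_⟩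
  obtain ⟨_, _, hab, hba⟩ := hseq
  have step : ∀ i ∈ Finset.range (k+1), |gmap C x (b i) - gmap C x (a i)|
      ≤ L * ((b i:ℝ) - (a i:ℝ)) := by
    intro i hi
    have h := hlip (a i) (b i)
    have hle : (a i:ℝ) ≤ (b i:ℝ) := Subtype.coe_le_coe.mpr (hab i (by simpa [Finset.mem_range, Nat.lt_succ_iff] using hi))
    have habs : |(b i:ℝ) - (a i:ℝ)| = (b i:ℝ) - (a i:ℝ) := abs_of_nonneg (by linarith)
    rwa [habs] at h
  calc ∑ i ∈ Finset.range (k+1), |gmap C x (b i) - gmap C x (a i)|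
      ≤ ∑ i ∈ Finset.range (k+1), L * ((b i:ℝ) - (a i:ℝ)) := Finset.sum_le_sum step
    _ = L * ∑ i ∈ Finset.range (k+1), ((b i:ℝ) - (a i:ℝ)) := by rw [Finset.mul_sum]
    _ ≤ L * 1 := by
        refine mul_le_mul_of_nonneg_left ?_ hL0
        have := seq_sum_le k a b hab hba
        have hb1 : ((b k):ℝ) ≤ 1 := (b k).2.2
        have ha0 : (0:ℝ) ≤ ((a 0):ℝ) := (a 0).2.1
        linarith
    _ < L + 1 := by linarith

lemma pt_mem (k : ℕ) (c : ℝ) (h0 : 0 ≤ c) (h1 : c ≤ 1) :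
    lpt k + c * (1/2:ℝ)^(k+1) ∈ unitInterval := by
  constructor
  · have := lpt_nonneg k
    have : (0:ℝ) ≤ c * (1/2:ℝ)^(k+1) := by positivity
    have := lpt_nonneg k
    linarith
  · have hp : (0:ℝ) < (1/2:ℝ)^(k+1) := by positivity
    have : c * (1/2:ℝ)^(k+1) ≤ (1/2:ℝ)^(k+1) := by nlinarith
    have h2 := lpt_le_one (k+1)
    have h3 := lpt_succ k
    linarith

lemma sum_big (C : ℕ → Set (ℕ → ℕ)) (x : ℕ → ℕ) (k : ℕ) (hk : cc C k x = 1) :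
    ∃ a b : ℕ → unitInterval, SeqOn Set.univ (4^k - 1) a b ∧
      ∑ i ∈ Finset.range (4^k - 1 + 1), |gmap C x (b i) - gmap C x (a i)|
        = (4:ℝ)^k * (1/2:ℝ)^(k+1) := by
  set M : ℕ := 4^k with hM
  have hM0 : 0 < M := pow_pos (by norm_num) k
  have h4 : (0:ℝ) < (4:ℝ)^k := by positivity
  have hMc : ((M:ℕ):ℝ) = (4:ℝ)^k := by push_cast [hM]; norm_num
  have hfa : ∀ i : ℕ, (0:ℝ) ≤ ((min i M : ℕ):ℝ)/(4:ℝ)^k ∧ ((min i M : ℕ):ℝ)/(4:ℝ)^k ≤ 1 := by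
    intro i
    constructor
    · positivity
    · rw [div_le_one h4, ← hMc]
      exact_mod_cast min_le_right i M
  have hfb : ∀ i : ℕ, (0:ℝ) ≤ ((min (2*i+1) (2*M) : ℕ):ℝ)/(2*(4:ℝ)^k)
      ∧ ((min (2*i+1) (2*M) : ℕ):ℝ)/(2*(4:ℝ)^k) ≤ 1 := by
    intro i
    constructor
    · positivity
    · rw [div_le_one (by positivity), ← hMc]
      have : (min (2*i+1) (2*M) : ℕ) ≤ 2*M := min_le_right _ _
      calc ((min (2*i+1) (2*M) : ℕ):ℝ) ≤ ((2*M:ℕ):ℝ) := by exact_mod_cast this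
        _ = 2 * (M:ℝ) := by push_cast; ring
  refine ⟨fun i => ⟨lpt k + (((min i M : ℕ):ℝ)/(4:ℝ)^k) * (1/2:ℝ)^(k+1),
      pt_mem k _ (hfa i).1 (hfa i).2⟩,
    fun i => ⟨lpt k + (((min (2*i+1) (2*M) : ℕ):ℝ)/(2*(4:ℝ)^k)) * (1/2:ℝ)^(k+1),
      pt_mem k _ (hfb i).1 (hfb i).2⟩, ?_, ?_⟩
  · refine ⟨fun _ _ => trivial, fun _ _ => trivial, ?_, ?_⟩
    · intro i hi
      have hiM : i < M := by omega
      rw [Subtype.mk_le_mk]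
      have h1 : (min i M : ℕ) = i := min_eq_left hiM.le
      have h2 : (min (2*i+1) (2*M) : ℕ) = 2*i+1 := min_eq_left (by omega)
      rw [h1, h2]
      have : ((i:ℕ):ℝ)/(4:ℝ)^k ≤ (((2*i+1:ℕ)):ℝ)/(2*(4:ℝ)^k) := by
        rw [div_le_div_iff₀ h4 (by positivity)]
        push_cast
        nlinarith
      nlinarith [this, (by positivity : (0:ℝ) < (1/2:ℝ)^(k+1))]
    · intro i hi
      have hiM : i + 1 < M := by omega
      rw [Subtype.mk_le_mk]
      have h1 : (min (i+1) M : ℕ) = i+1 := min_eq_left hiM.le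
      have h2 : (min (2*i+1) (2*M) : ℕ) = 2*i+1 := min_eq_left (by omega)
      rw [h1, h2]
      have : (((2*i+1:ℕ)):ℝ)/(2*(4:ℝ)^k) ≤ (((i+1:ℕ)):ℝ)/(4:ℝ)^k := by
        rw [div_le_div_iff₀ (by positivity) h4]
        push_cast
        nlinarith
      nlinarith [this, (by positivity : (0:ℝ) < (1/2:ℝ)^(k+1))]
  · have key : ∀ i ∈ Finset.range (4^k - 1 + 1),
        |gmap C x ⟨lpt k + (((min (2*i+1) (2*M) : ℕ):ℝ)/(2*(4:ℝ)^k)) * (1/2:ℝ)^(k+1),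
            pt_mem k _ (hfb i).1 (hfb i).2⟩
          - gmap C x ⟨lpt k + (((min i M : ℕ):ℝ)/(4:ℝ)^k) * (1/2:ℝ)^(k+1),
            pt_mem k _ (hfa i).1 (hfa i).2⟩| = (1/2:ℝ)^(k+1) := by
      intro i hi
      have hiM : i < M := by
        simp only [Finset.mem_range] at hi
        omega
      have h1 : (min i M : ℕ) = i := min_eq_left hiM.le
      have h2 : (min (2*i+1) (2*M) : ℕ) = 2*i+1 := min_eq_left (by omega)
      have hmema : lpt k ≤ lpt k + (((min i M : ℕ):ℝ)/(4:ℝ)^k) * (1/2:ℝ)^(k+1) := by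
        nlinarith [(hfa i).1, (by positivity : (0:ℝ) < (1/2:ℝ)^(k+1))]
      have hmema' : lpt k + (((min i M : ℕ):ℝ)/(4:ℝ)^k) * (1/2:ℝ)^(k+1) ≤ lpt (k+1) := by
        rw [lpt_succ]
        nlinarith [(hfa i).2, (by positivity : (0:ℝ) < (1/2:ℝ)^(k+1))]
      have hmemb : lpt k ≤ lpt k + (((min (2*i+1) (2*M) : ℕ):ℝ)/(2*(4:ℝ)^k)) * (1/2:ℝ)^(k+1) := by
        nlinarith [(hfb i).1, (by positivity : (0:ℝ) < (1/2:ℝ)^(k+1))]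
      have hmemb' : lpt k + (((min (2*i+1) (2*M) : ℕ):ℝ)/(2*(4:ℝ)^k)) * (1/2:ℝ)^(k+1) ≤ lpt (k+1) := by
        rw [lpt_succ]
        nlinarith [(hfb i).2, (by positivity : (0:ℝ) < (1/2:ℝ)^(k+1))]
      rw [gmap_single C x k _ hmemb hmemb', gmap_single C x k _ hmema hmema']
      show |cc C k x * psi k (lpt k + (((min (2*i+1) (2*M) : ℕ):ℝ)/(2*(4:ℝ)^k)) * (1/2:ℝ)^(k+1))
        - cc C k x * psi k (lpt k + (((min i M : ℕ):ℝ)/(4:ℝ)^k) * (1/2:ℝ)^(k+1))| = _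
      rw [h1, h2, hk]
      have ea : psi k (lpt k + (((i:ℕ):ℝ)/(4:ℝ)^k) * (1/2:ℝ)^(k+1)) = 0 :=
        psi_at_a k i (by omega)
      have eb : psi k (lpt k + ((((2*i+1:ℕ)):ℝ)/(2*(4:ℝ)^k)) * (1/2:ℝ)^(k+1)) = (1/2:ℝ)^(k+1) :=
        psi_at_b k i (by omega)
      rw [one_mul, one_mul]
      push_cast at ea eb ⊢
      rw [ea, eb, sub_zero, abs_of_pos (by positivity)]
    rw [Finset.sum_congr rfl key, Finset.sum_const, Finset.card_range]
    have : (4^k - 1 + 1 : ℕ) = M := by omega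
    rw [this, nsmul_eq_mul, hMc]

lemma not_isVBOn (C : ℕ → Set (ℕ → ℕ)) (hC : ∀ n, IsClosed (C n)) (x : ℕ → ℕ)
    (hx : x ∉ ⋃ n, C n) : ¬ IsVBOn (gmap C x) Set.univ := by
  rintro ⟨N, hN⟩
  obtain ⟨n, hn⟩ := pow_unbounded_of_one_lt N (by norm_num : (1:ℝ) < 2)
  obtain ⟨k, hk, hck⟩ := cc_infinitely_one C hC hx (n+1)
  obtain ⟨a, b, hseq, hsum⟩ := sum_big C x k hck
  have hlt := hN _ a b hseq
  rw [hsum] at hlt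
  have h1 : (4:ℝ)^k * (1/2:ℝ)^(k+1) = (2:ℝ)^k / 2 := by
    rw [show (4:ℝ) = 2*2 by norm_num, mul_pow, pow_succ]
    field_simp
    rw [← mul_pow]; norm_num
  have h2 : (2:ℝ)^(n+1) ≤ (2:ℝ)^k := pow_le_pow_right₀ (by norm_num) hk
  rw [pow_succ] at h2
  rw [h1] at hlt
  linarith

lemma fsigma_BV : IsFSigma {F : CI | IsVBOn F Set.univ} := by
  refine ⟨fun n => {F : CI | ∀ k a b, SeqOn Set.univ k a b →
      ∑ i ∈ Finset.range (k+1), |F (b i) - F (a i)| ≤ (n:ℝ)}, fun n => ?_, ?_⟩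
  · have heq : {F : CI | ∀ k a b, SeqOn Set.univ k a b →
        ∑ i ∈ Finset.range (k+1), |F (b i) - F (a i)| ≤ (n:ℝ)}
        = ⋂ (k : ℕ), ⋂ (a : ℕ → unitInterval), ⋂ (b : ℕ → unitInterval),
          ⋂ (_ : SeqOn Set.univ k a b),
          {F : CI | ∑ i ∈ Finset.range (k+1), |F (b i) - F (a i)| ≤ (n:ℝ)} := by
      ext F
      simp only [Set.mem_setOf_eq, Set.mem_iInter]
    show IsClosed {F : CI | ∀ k a b, SeqOn Set.univ k a b →
        ∑ i ∈ Finset.range (k+1), |F (b i) - F (a i)| ≤ (n:ℝ)}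
    rw [heq]
    refine isClosed_iInter fun k => isClosed_iInter fun a => isClosed_iInter fun b =>
      isClosed_iInter fun _ => ?_
    have hcont : Continuous fun F : CI => ∑ i ∈ Finset.range (k+1), |F (b i) - F (a i)| := by
      apply continuous_finset_sum
      intro i _
      exact ((continuous_eval_const (b i)).sub
        (continuous_eval_const (a i))).abs
    exact IsClosed.preimage hcont isClosed_Iic
  · ext F
    simp only [Set.mem_setOf_eq, Set.mem_iUnion]
    constructor
    · rintro ⟨N, hN⟩
      exact ⟨⌈N⌉₊, fun k a b h => le_trans (hN k a b h).le (Nat.le_ceil N)⟩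
    · rintro ⟨n, hn⟩
      refine ⟨(n:ℝ) + 1, fun k a b h => lt_of_le_of_lt (hn k a b h) (by norm_num)⟩
/-- The set of continuous functions of bounded variation is `Σ⁰₂`-complete: it is Fσ in
`C(I)`, and every Fσ subset of Baire space continuously reduces to it. -/
theorem boundedVariation_sigma02_complete :
    IsFSigma {F : CI | IsVBOn F Set.univ} ∧
    ∀ B : Set (ℕ → ℕ), IsFSigma B →
      ∃ g : (ℕ → ℕ) → CI, Continuous g ∧ g ⁻¹' {F : CI | IsVBOn F Set.univ} = B := by
  constructor
  · exact fsigma_BV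
  · rintro B ⟨C, hC, hB⟩
    refine ⟨gmap C, gmap_cont C, ?_⟩
    ext x
    simp only [Set.mem_preimage, Set.mem_setOf_eq]
    constructor
    · intro hVB
      by_contra hx
      rw [hB] at hx
      exact not_isVBOn C hC x hx hVB
    · intro hxB
      rw [hB] at hxB
      obtain ⟨K, hK⟩ := cc_eventually_zero C hxB
      exact isVBOn_of_ev_zero C x K hK
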